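/- Let Z : E → F be a linear map between finite-dimensional real normed vector spaces, V ⊆ F a strict convex cone, and ε > 0. Then the convex cone C(V,Z,ε) generated by {x ∈ E : Z(x) ∈ V and ‖Z(x)‖ ≥ ε‖x‖} is strict, and moreover there exists ε' > 0 such that ‖Z(x)‖ ≥ ε'‖x‖ for all x ∈ C(V,Z,ε). -/

import Mathlib

open Set Module

open scoped RealInnerProductSpace InnerProductSpace
lemma aux_inner {H : Type*} [NormedAddCommGroup H] [InnerProductSpace ℝ H]
    [FiniteDimensional ℝ H] (K : ConvexCone ℝ H) (hcl : IsClosed (K : Set H))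
    (h0 : (0 : H) ∈ K)
    (hpt : ∀ x ∈ K, -x ∈ K → x = 0) :
    ∃ (w : H) (c : ℝ), 0 < c ∧ ∀ x ∈ K, c * ‖x‖ ≤ ⟪x, w⟫_ℝ := by
  have hne : (K : Set H).Nonempty := ⟨0, h0⟩
  let KP : ProperCone ℝ H :=
    { carrier := (K : Set H)
      add_mem' := fun hx hy => K.add_mem hx hy
      zero_mem' := h0
      smul_mem' := fun c x hx => by
        rcases eq_or_ne c 0 with h | h
        · rw [h, zero_smul]; exact h0
        · change (c : ℝ) • x ∈ (K : Set H)
          exact K.smul_mem (NNReal.coe_pos.mpr (pos_iff_ne_zero.mpr h)) hx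
      isClosed' := hcl }
  have hbipolar : ((ProperCone.innerDual
      ((ProperCone.innerDual (K : Set H) : ProperCone ℝ H) : Set H) : ProperCone ℝ H) : Set H)
      = (K : Set H) :=
    congrArg (fun C : ProperCone ℝ H => (C : Set H)) (ProperCone.innerDual_innerDual KP)
  set D : ConvexCone ℝ H :=
    PointedCone.toConvexCone (ProperCone.innerDual (K : Set H)).toSubmodule with hD
  have h0D : (0 : H) ∈ (D : Set H) := (ProperCone.innerDual (K : Set H)).toSubmodule.zero_mem
  by_cases hspan : Submodule.span ℝ (D : Set H) = ⊤
  · -- interior of D is nonempty; an interior point is a strictly positive functional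
    have haff' : ∀ x : H, x ∈ Submodule.span ℝ (D : Set H) → x ∈ affineSpan ℝ (D : Set H) := by
      intro x hx
      induction hx using Submodule.span_induction with
      | mem y hy => exact subset_affineSpan ℝ _ hy
      | zero => exact subset_affineSpan ℝ _ h0D
      | add y z hy hz hy' hz' =>
          have := AffineSubspace.smul_vsub_vadd_mem (affineSpan ℝ (D : Set H)) (1 : ℝ)
            hy' (subset_affineSpan ℝ _ h0D) hz'
          simpa using this
      | smul c y hy hy' =>
          have := AffineSubspace.smul_vsub_vadd_mem (affineSpan ℝ (D : Set H)) c
            hy' (subset_affineSpan ℝ _ h0D) (subset_affineSpan ℝ _ h0D)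
          simpa using this
    have haff : affineSpan ℝ (D : Set H) = ⊤ := by
      rw [eq_top_iff]
      intro x _
      exact haff' x (hspan ▸ Submodule.mem_top)
    have hint : (interior (D : Set H)).Nonempty :=
      (D.convex.interior_nonempty_iff_affineSpan_eq_top).2 haff
    obtain ⟨w, hw⟩ := hint
    obtain ⟨r, hr, hball⟩ := Metric.isOpen_iff.1 isOpen_interior w hw
    refine ⟨w, r / 2, by positivity, ?_⟩
    intro x hx
    rcases eq_or_ne x 0 with rfl | hx0
    · simp
    · have hxn : 0 < ‖x‖ := norm_pos_iff.mpr hx0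
      set t : ℝ := r / (2 * ‖x‖) with htdef
      have htpos : 0 < t := by positivity
      have hmem : w - t • x ∈ (D : Set H) := by
        apply interior_subset
        apply hball
        rw [Metric.mem_ball, dist_eq_norm]
        have h1 : w - t • x - w = -(t • x) := by abel
        have h2 : t * ‖x‖ = r / 2 := by
          rw [htdef]; field_simp
        rw [h1, norm_neg, norm_smul, Real.norm_eq_abs, abs_of_pos htpos, h2]
        linarith
      have hineq : 0 ≤ ⟪x, w - t • x⟫_ℝ := by
        exact (ProperCone.mem_innerDual.mp hmem) hx
      rw [inner_sub_right, real_inner_smul_right, real_inner_self_eq_norm_sq] at hineq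
      have : t * (‖x‖ * ‖x‖) = (r / 2) * ‖x‖ := by
        rw [htdef]; field_simp
      nlinarith
  · -- otherwise the span of D is a proper subspace; pick v orthogonal to it
    exfalso
    set W : Submodule ℝ H := Submodule.span ℝ (D : Set H) with hW
    have hWbot : Wᗮ ≠ ⊥ := by
      intro h
      exact hspan (Submodule.orthogonal_eq_bot_iff.mp h)
    obtain ⟨v, hvW, hv0⟩ := Submodule.exists_mem_ne_zero_of_ne_bot hWbot
    have key : ∀ s : ℝ, s • v ∈ K := by
      intro s
      rw [← SetLike.mem_coe, ← hbipolar, SetLike.mem_coe, ProperCone.mem_innerDual]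
      intro y hy
      have : ⟪s • v, y⟫_ℝ = 0 := by
        rw [real_inner_smul_left]
        have := (Submodule.mem_orthogonal W v).mp hvW y (Submodule.subset_span hy)
        rw [real_inner_comm] at this
        rw [this, mul_zero]
      rw [real_inner_comm] at this
      rw [this]
    have h1 : v ∈ K := by simpa using key 1
    have h2 : -v ∈ (K : Set H) := by
      have := key (-1); simpa using this
    exact hv0 (hpt v h1 h2)

section AuxFun

lemma aux_fun {F : Type*} [NormedAddCommGroup F] [NormedSpace ℝ F] [FiniteDimensional ℝ F]
    (K : Set F) (hcl : IsClosed K)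
    (hsc : ∀ r : ℝ, 0 < r → ∀ x ∈ K, r • x ∈ K)
    (hadd : ∀ x ∈ K, ∀ y ∈ K, x + y ∈ K)
    (h0 : (0 : F) ∈ K)
    (hpt : ∀ x ∈ K, -x ∈ K → x = 0) :
    ∃ (φ : F →ₗ[ℝ] ℝ) (c L : ℝ), 0 < c ∧ 0 < L ∧ (∀ x ∈ K, c * ‖x‖ ≤ φ x) ∧
      ∀ y : F, φ y ≤ L * ‖y‖ := by
  set e := toEuclidean (E := F) with he
  set H := EuclideanSpace ℝ (Fin (finrank ℝ F))
  let K' : ConvexCone ℝ H :=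
    { carrier := e '' K
      smul_mem' := by
        rintro c hc x ⟨k, hk, rfl⟩
        exact ⟨c • k, hsc c hc k hk, by simp⟩
      add_mem' := by
        rintro x ⟨k, hk, rfl⟩ y ⟨l, hl, rfl⟩
        exact ⟨k + l, hadd k hk l hl, by simp⟩ }
  have hK'cl : IsClosed (K' : Set H) := e.toHomeomorph.isClosedMap K hcl
  have h0' : (0 : H) ∈ K' := ⟨0, h0, map_zero e⟩
  have hpt' : ∀ x ∈ K', -x ∈ K' → x = 0 := by
    intro x hx hnx
    obtain ⟨k, hk, rfl⟩ : ∃ k ∈ K, e k = x := by simpa [K'] using hx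
    obtain ⟨l, hl, hle⟩ : ∃ l ∈ K, e l = -(e k) := by simpa [K'] using hnx
    have hlk : l = -k := by
      apply e.injective
      rw [hle, map_neg]
    rw [hlk] at hl
    rw [hpt k hk hl, map_zero]
  obtain ⟨w, c', hc', hw⟩ := aux_inner K' hK'cl h0' hpt'
  let eL : F →L[ℝ] H := e.toContinuousLinearMap
  let eL' : H →L[ℝ] F := e.symm.toContinuousLinearMap
  refine ⟨((innerSL ℝ w).comp eL).toLinearMap, c' / (‖eL'‖ + 1),
    (‖w‖ + 1) * (‖eL‖ + 1), by positivity, by positivity, ?_, ?_⟩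
  · intro x hx
    have h1 : c' * ‖e x‖ ≤ ⟪e x, w⟫_ℝ := hw (e x) ⟨x, hx, rfl⟩
    have h2 : ‖x‖ ≤ ‖eL'‖ * ‖e x‖ := by
      have h2' := eL'.le_opNorm (e x)
      have hxx : eL' (e x) = x := e.symm_apply_apply x
      rwa [hxx] at h2'
    have h3 : (0:ℝ) ≤ ‖e x‖ := norm_nonneg _
    have h4 : (0:ℝ) ≤ ‖eL'‖ := norm_nonneg _
    have heq : (((innerSL ℝ w).comp eL).toLinearMap : F →ₗ[ℝ] ℝ) x = ⟪w, e x⟫_ℝ := rfl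
    rw [heq, real_inner_comm]
    rw [div_mul_eq_mul_div, div_le_iff₀ (by positivity)]
    nlinarith
  · intro y
    have h1 : ⟪w, e y⟫_ℝ ≤ ‖w‖ * ‖e y‖ := real_inner_le_norm w (e y)
    have h2 : ‖e y‖ ≤ ‖eL‖ * ‖y‖ := by
      have := eL.le_opNorm y
      exact this
    have h3 : (0:ℝ) ≤ ‖e y‖ := norm_nonneg _
    have h4 : (0:ℝ) ≤ ‖w‖ := norm_nonneg w
    have h5 : (0:ℝ) ≤ ‖eL‖ := norm_nonneg _
    have h6 : (0:ℝ) ≤ ‖y‖ := norm_nonneg _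
    have heq : (((innerSL ℝ w).comp eL).toLinearMap : F →ₗ[ℝ] ℝ) y = ⟪w, e y⟫_ℝ := rfl
    rw [heq]
    nlinarith

end AuxFun

/-- The conical hull of a set `S`: the smallest convex cone containing `S`
(the set of finite positive combinations of elements of `S`). -/
def coneHull {E : Type*} [AddCommMonoid E] [SMul ℝ E] (S : Set E) : Set E :=
  ⋂₀ {C : Set E | S ⊆ C ∧ (∀ r : ℝ, 0 < r → ∀ x ∈ C, r • x ∈ C) ∧
      ∀ x ∈ C, ∀ y ∈ C, x + y ∈ C}

lemma coneHull_subset {E : Type*} [AddCommMonoid E] [SMul ℝ E] {S C : Set E}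
    (h1 : S ⊆ C) (h2 : ∀ r : ℝ, 0 < r → ∀ x ∈ C, r • x ∈ C)
    (h3 : ∀ x ∈ C, ∀ y ∈ C, x + y ∈ C) : coneHull S ⊆ C :=
  Set.sInter_subset_of_mem ⟨h1, h2, h3⟩

/-- For a linear map `Z : E → F`, a strict convex cone `V ⊆ F` and `ε > 0`,
the convex cone generated by `{x | Z x ∈ V, ‖Z x‖ ≥ ε ‖x‖}` is strict, and there is
`ε' > 0` with `‖Z x‖ ≥ ε' ‖x‖` on it. -/
theorem stmt1 {E F : Type*} [NormedAddCommGroup E] [NormedSpace ℝ E] [FiniteDimensional ℝ E]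
    [NormedAddCommGroup F] [NormedSpace ℝ F] [FiniteDimensional ℝ F]
    (Z : E →ₗ[ℝ] F) (V : Set F)
    (hVscale : ∀ r : ℝ, 0 < r → ∀ x ∈ V, r • x ∈ V)
    (hVadd : ∀ x ∈ V, ∀ y ∈ V, x + y ∈ V)
    (hVstrict : ¬ ∃ (p v : F), v ≠ 0 ∧ ∀ t : ℝ, p + t • v ∈ closure V)
    (ε : ℝ) (hε : 0 < ε) :
    (¬ ∃ (p v : E), v ≠ 0 ∧ ∀ t : ℝ,
        p + t • v ∈ closure (coneHull {x : E | Z x ∈ V ∧ ε * ‖x‖ ≤ ‖Z x‖})) ∧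
    ∃ ε' : ℝ, 0 < ε' ∧
      ∀ x ∈ coneHull {x : E | Z x ∈ V ∧ ε * ‖x‖ ≤ ‖Z x‖}, ε' * ‖x‖ ≤ ‖Z x‖ := by
  classical
  set S : Set E := {x : E | Z x ∈ V ∧ ε * ‖x‖ ≤ ‖Z x‖} with hSdef
  have hZc : Continuous Z := Z.continuous_of_finiteDimensional
  rcases V.eq_empty_or_nonempty with hV | hVne
  · -- V empty: the cone is empty
    have hS : S = ∅ := by
      ext x; simp [hSdef, hV]
    have hch0 : coneHull S = ∅ := Set.subset_empty_iff.mp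
      (coneHull_subset (by simp [hS]) (by simp) (by simp))
    constructor
    · rintro ⟨p, v, hv, hline⟩
      have := hline 0
      rw [hch0, closure_empty] at this
      exact this
    · refine ⟨1, one_pos, fun x hx => ?_⟩
      rw [hch0] at hx
      exact absurd hx (Set.notMem_empty x)
  · set K := closure V with hKdef
    have hKcl : IsClosed K := isClosed_closure
    have hKsc : ∀ r : ℝ, 0 < r → ∀ x ∈ K, r • x ∈ K := fun r hr x hx =>
      map_mem_closure (continuous_const_smul r) hx (fun y hy => hVscale r hr y hy)
    have hKadd : ∀ x ∈ K, ∀ y ∈ K, x + y ∈ K := fun x hx y hy =>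
      map_mem_closure₂ continuous_add hx hy hVadd
    have hK0 : (0 : F) ∈ K := by
      obtain ⟨y, hy⟩ := hVne
      have fc : Filter.Tendsto (fun r : ℝ => r • y) (nhdsWithin 0 (Set.Ioi 0)) (nhds 0) := by
        have h1 : Filter.Tendsto (fun r : ℝ => r • y) (nhds 0) (nhds ((0 : ℝ) • y)) :=
          (continuous_id.smul continuous_const).tendsto 0
        rw [zero_smul] at h1
        exact h1.mono_left nhdsWithin_le_nhds
      refine mem_closure_of_tendsto fc ?_
      filter_upwards [self_mem_nhdsWithin] with r hr
      exact hVscale r hr y hy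
    have hKpt : ∀ x ∈ K, -x ∈ K → x = 0 := by
      intro x hx hnx
      by_contra hx0
      apply hVstrict
      refine ⟨0, x, hx0, fun t => ?_⟩
      rcases lt_trichotomy t 0 with ht | ht | ht
      · have h1 := hKsc (-t) (by linarith) (-x) hnx
        have h2 : (-t) • (-x) = t • x := by rw [smul_neg, neg_smul, neg_neg]
        rw [h2] at h1
        simpa using h1
      · rw [ht, zero_smul, add_zero]
        exact hK0
      · have h1 := hKsc t ht x hx
        simpa using h1
    obtain ⟨φ, c, L, hc, hL, hφK, hφL⟩ := aux_fun K hKcl hKsc hKadd hK0 hKpt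
    set ε' := ε * c / L with hε'def
    have hε'pos : 0 < ε' := by positivity
    set T : Set E := {x : E | Z x ∈ K ∧ ε * c * ‖x‖ ≤ φ (Z x)} with hTdef
    have hST : S ⊆ T := by
      rintro x ⟨hxV, hxn⟩
      refine ⟨subset_closure hxV, ?_⟩
      have h1 : c * ‖Z x‖ ≤ φ (Z x) := hφK _ (subset_closure hxV)
      nlinarith [norm_nonneg x, norm_nonneg (Z x)]
    have hTsc : ∀ r : ℝ, 0 < r → ∀ x ∈ T, r • x ∈ T := by
      rintro r hr x ⟨h1, h2⟩
      refine ⟨by rw [map_smul]; exact hKsc r hr _ h1, ?_⟩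
      rw [map_smul, map_smul, norm_smul, Real.norm_eq_abs, abs_of_pos hr, smul_eq_mul]
      nlinarith
    have hTadd : ∀ x ∈ T, ∀ y ∈ T, x + y ∈ T := by
      rintro x ⟨h1, h2⟩ y ⟨h3, h4⟩
      refine ⟨by rw [map_add]; exact hKadd _ h1 _ h3, ?_⟩
      rw [map_add, map_add]
      have h5 := norm_add_le x y
      have h6 : 0 ≤ ε * c := by positivity
      nlinarith
    have hCT : coneHull S ⊆ T := coneHull_subset hST hTsc hTadd
    have hbound : ∀ x ∈ coneHull S, ε' * ‖x‖ ≤ ‖Z x‖ := by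
      intro x hx
      obtain ⟨h1, h2⟩ := hCT hx
      have h3 : φ (Z x) ≤ L * ‖Z x‖ := hφL _
      rw [hε'def, div_mul_eq_mul_div, div_le_iff₀ hL]
      nlinarith [norm_nonneg x]
    refine ⟨?_, ε', hε'pos, hbound⟩
    rintro ⟨p, v, hv, hline⟩
    have hclosed : IsClosed {x : E | Z x ∈ K ∧ ε' * ‖x‖ ≤ ‖Z x‖} := by
      have e1 : IsClosed {x : E | Z x ∈ K} := hKcl.preimage hZc
      have e2 : IsClosed {x : E | ε' * ‖x‖ ≤ ‖Z x‖} :=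
        isClosed_le (by fun_prop) (by fun_prop)
      exact e1.inter e2
    have hsub : closure (coneHull S) ⊆ {x : E | Z x ∈ K ∧ ε' * ‖x‖ ≤ ‖Z x‖} :=
      closure_minimal (fun x hx => ⟨(hCT hx).1, hbound x hx⟩) hclosed
    by_cases hZv : Z v = 0
    · have hvn : 0 < ‖v‖ := norm_pos_iff.mpr hv
      set t : ℝ := (‖Z p‖ / ε' + ‖p‖ + 1) / ‖v‖ with htdef
      have htpos : 0 < t := by positivity
      have h1 := (hsub (hline t)).2
      have h2 : ‖Z (p + t • v)‖ = ‖Z p‖ := by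
        rw [map_add, map_smul, hZv, smul_zero, add_zero]
      have h3 : t * ‖v‖ - ‖p‖ ≤ ‖p + t • v‖ := by
        have h4 : ‖t • v‖ - ‖p‖ ≤ ‖p + t • v‖ := by
          have := norm_add_le (p + t • v) (-p)
          simp only [add_neg_cancel_comm, norm_neg] at this
          linarith
        rw [norm_smul, Real.norm_eq_abs, abs_of_pos htpos] at h4
        exact h4
      have h5 : t * ‖v‖ = ‖Z p‖ / ε' + ‖p‖ + 1 := div_mul_cancel₀ _ hvn.ne'
      have h6 : ε' * (‖Z p‖ / ε') = ‖Z p‖ := by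
        field_simp
      rw [h2] at h1
      nlinarith
    · refine hVstrict ⟨Z p, Z v, hZv, fun t => ?_⟩
      have h1 := (hsub (hline t)).1
      rw [map_add, map_smul] at h1
      exact h1
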